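/- For all k ∈ (0,1), the complete elliptic integrals satisfy Legendre's relation K(k)·E(k') + E(k)·K(k') − K(k)·K(k') = π/2, where k' = √(1-k²). -/

import Mathlib

open Real

noncomputable def ellipticK (k : ℝ) : ℝ :=
  ∫ θ in (0:ℝ)..(π/2), 1 / Real.sqrt (1 - k^2 * Real.sin θ ^ 2)

noncomputable def ellipticE (k : ℝ) : ℝ :=
  ∫ θ in (0:ℝ)..(π/2), Real.sqrt (1 - k^2 * Real.sin θ ^ 2)

open Set intervalIntegral MeasureTheory Filter

lemma delta_pos {x : ℝ} (hx : x^2 < 1) (θ : ℝ) : 0 < 1 - x^2 * Real.sin θ ^ 2 := by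
  nlinarith [Real.sin_sq_le_one θ, sq_nonneg x, sq_nonneg (Real.sin θ)]

lemma hasDerivAt_sqrtDelta {s x : ℝ} (hx : 0 < 1 - x^2*s^2) :
    HasDerivAt (fun x => Real.sqrt (1 - x^2*s^2))
      (-(x*s^2)/Real.sqrt (1 - x^2*s^2)) x := by
  have h1 : HasDerivAt (fun x : ℝ => 1 - x^2*s^2) (-(2*x)*s^2) x := by
    have := ((hasDerivAt_pow 2 x).mul_const (s^2)).const_sub 1
    refine this.congr_deriv (Eq.symm ?_)
    ring
  have h2 := (Real.hasDerivAt_sqrt hx.ne').comp x h1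
  refine h2.congr_deriv (Eq.symm ?_)
  have h3 : Real.sqrt (1 - x^2*s^2) ≠ 0 := ne_of_gt (Real.sqrt_pos.2 hx)
  field_simp

lemma hasDerivAt_invSqrtDelta {s x : ℝ} (hx : 0 < 1 - x^2*s^2) :
    HasDerivAt (fun x => 1 / Real.sqrt (1 - x^2*s^2))
      (x*s^2/((1 - x^2*s^2) * Real.sqrt (1 - x^2*s^2))) x := by
  have h3 : Real.sqrt (1 - x^2*s^2) ≠ 0 := ne_of_gt (Real.sqrt_pos.2 hx)
  have h2 := (hasDerivAt_sqrtDelta hx).inv h3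
  simp only [one_div]
  refine h2.congr_deriv (Eq.symm ?_)
  have h4 : Real.sqrt (1 - x^2*s^2) ^ 2 = 1 - x^2*s^2 := Real.sq_sqrt hx.le
  rw [h4]
  field_simp

lemma cont_delta (x : ℝ) : Continuous fun θ : ℝ => Real.sqrt (1 - x^2 * Real.sin θ ^ 2) := by
  fun_prop

lemma cont_inv {x : ℝ} (hx : x^2 < 1) :
    Continuous fun θ : ℝ => 1 / Real.sqrt (1 - x^2 * Real.sin θ ^ 2) := by
  apply Continuous.div continuous_const (cont_delta x)
  intro θ
  exact ne_of_gt (Real.sqrt_pos.2 (delta_pos hx θ))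

lemma ball_facts {k x : ℝ} (hk : k ∈ Set.Ioo (0:ℝ) 1)
    (hx : x ∈ Metric.ball k (min k (1-k) / 2)) :
    0 < x ∧ |x| ≤ (1+k)/2 ∧ x^2 < 1 := by
  obtain ⟨hk0, hk1⟩ := hk
  rw [Metric.mem_ball, Real.dist_eq] at hx
  have h1 : min k (1-k) ≤ k := min_le_left _ _
  have h2 : min k (1-k) ≤ 1 - k := min_le_right _ _
  have hax := abs_lt.1 hx
  constructor
  · nlinarith [hax.1]
  constructor
  · rw [abs_le]; constructor <;> nlinarith [hax.1, hax.2]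
  · nlinarith [hax.1, hax.2, h1, h2]

lemma hasDerivAt_ellipticK {k : ℝ} (hk : k ∈ Set.Ioo (0:ℝ) 1) :
    HasDerivAt ellipticK
      (∫ θ in (0:ℝ)..(π/2), k * Real.sin θ ^ 2 /
        ((1 - k^2 * Real.sin θ ^ 2) * Real.sqrt (1 - k^2 * Real.sin θ ^ 2))) k := by
  obtain ⟨hk0, hk1⟩ := hk
  have hk2 : k^2 < 1 := by nlinarith
  set ε : ℝ := min k (1-k) / 2 with hε
  have hεpos : 0 < ε := by
    apply div_pos _ (by norm_num)
    exact lt_min hk0 (by linarith)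
  set m : ℝ := (1+k)/2 with hm
  have hm1 : m < 1 := by rw [hm]; linarith
  have hm0 : 0 < m := by rw [hm]; linarith
  have hmsq : 0 < 1 - m^2 := by nlinarith
  have key := intervalIntegral.hasDerivAt_integral_of_dominated_loc_of_deriv_le
    (F := fun x θ => 1 / Real.sqrt (1 - x^2 * Real.sin θ ^ 2))
    (F' := fun x θ => x * Real.sin θ ^ 2 /
        ((1 - x^2 * Real.sin θ ^ 2) * Real.sqrt (1 - x^2 * Real.sin θ ^ 2)))
    (x₀ := k) (a := 0) (b := π/2) (μ := MeasureTheory.volume)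
    (bound := fun _ => m / ((1 - m^2) * Real.sqrt (1 - m^2)))
    (Metric.ball_mem_nhds k hεpos) ?_ ?_ ?_ ?_ ?_ ?_
  · exact key.2
  · apply Filter.Eventually.of_forall
    intro x
    apply Measurable.aestronglyMeasurable
    fun_prop
  · exact (cont_inv hk2).intervalIntegrable _ _
  · apply Continuous.aestronglyMeasurable
    have hden : Continuous fun θ : ℝ =>
        (1 - k^2 * Real.sin θ ^ 2) * Real.sqrt (1 - k^2 * Real.sin θ ^ 2) := by fun_prop
    apply Continuous.div (by fun_prop) hden
    intro θ
    have := delta_pos hk2 θ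
    positivity
  · apply Filter.Eventually.of_forall
    intro t _ x hx
    obtain ⟨hx0, hxm, hx2⟩ := ball_facts ⟨hk0, hk1⟩ hx
    have hs : Real.sin t ^ 2 ≤ 1 := Real.sin_sq_le_one t
    have hs0 : 0 ≤ Real.sin t ^ 2 := sq_nonneg _
    have hxm' : |x| ≤ m := by rw [hm]; exact hxm
    have hx2m : x^2 ≤ m^2 := by nlinarith [sq_abs x, abs_nonneg x]
    have hu : 1 - m^2 ≤ 1 - x^2 * Real.sin t ^ 2 := by nlinarith
    have hupos : 0 < 1 - x^2 * Real.sin t ^ 2 := by linarith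
    rw [Real.norm_eq_abs, abs_div]
    have hnum : |x * Real.sin t ^ 2| ≤ m := by
      rw [abs_mul, abs_of_nonneg hs0]
      nlinarith [abs_nonneg x]
    have hdenpos : 0 < (1 - x^2 * Real.sin t ^ 2) * Real.sqrt (1 - x^2 * Real.sin t ^ 2) := by
      positivity
    rw [abs_of_pos hdenpos]
    apply div_le_div₀ (le_of_lt hm0) hnum (by positivity)
    apply mul_le_mul hu (Real.sqrt_le_sqrt hu) (Real.sqrt_nonneg _) (by linarith)
  · exact intervalIntegrable_const
  · apply Filter.Eventually.of_forall
    intro t _ x hx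
    obtain ⟨hx0, hxm, hx2⟩ := ball_facts ⟨hk0, hk1⟩ hx
    exact hasDerivAt_invSqrtDelta (delta_pos hx2 t)

lemma hasDerivAt_ellipticE {k : ℝ} (hk : k ∈ Set.Ioo (0:ℝ) 1) :
    HasDerivAt ellipticE
      (∫ θ in (0:ℝ)..(π/2), -(k * Real.sin θ ^ 2) / Real.sqrt (1 - k^2 * Real.sin θ ^ 2)) k := by
  obtain ⟨hk0, hk1⟩ := hk
  have hk2 : k^2 < 1 := by nlinarith
  set ε : ℝ := min k (1-k) / 2 with hε
  have hεpos : 0 < ε := by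
    apply div_pos _ (by norm_num)
    exact lt_min hk0 (by linarith)
  set m : ℝ := (1+k)/2 with hm
  have hm1 : m < 1 := by rw [hm]; linarith
  have hm0 : 0 < m := by rw [hm]; linarith
  have hmsq : 0 < 1 - m^2 := by nlinarith
  have key := intervalIntegral.hasDerivAt_integral_of_dominated_loc_of_deriv_le
    (F := fun x θ => Real.sqrt (1 - x^2 * Real.sin θ ^ 2))
    (F' := fun x θ => -(x * Real.sin θ ^ 2) / Real.sqrt (1 - x^2 * Real.sin θ ^ 2))
    (x₀ := k) (a := 0) (b := π/2) (μ := MeasureTheory.volume)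
    (bound := fun _ => m / Real.sqrt (1 - m^2))
    (Metric.ball_mem_nhds k hεpos) ?_ ?_ ?_ ?_ ?_ ?_
  · exact key.2
  · apply Filter.Eventually.of_forall
    intro x
    exact (cont_delta x).aestronglyMeasurable
  · exact (cont_delta k).intervalIntegrable _ _
  · apply Continuous.aestronglyMeasurable
    apply Continuous.div (by fun_prop) (cont_delta k)
    intro θ
    exact ne_of_gt (Real.sqrt_pos.2 (delta_pos hk2 θ))
  · apply Filter.Eventually.of_forall
    intro t _ x hx
    obtain ⟨hx0, hxm, hx2⟩ := ball_facts ⟨hk0, hk1⟩ hx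
    have hs : Real.sin t ^ 2 ≤ 1 := Real.sin_sq_le_one t
    have hs0 : 0 ≤ Real.sin t ^ 2 := sq_nonneg _
    have hxm' : |x| ≤ m := by rw [hm]; exact hxm
    have hx2m : x^2 ≤ m^2 := by nlinarith [sq_abs x, abs_nonneg x]
    have hu : 1 - m^2 ≤ 1 - x^2 * Real.sin t ^ 2 := by nlinarith
    have hupos : 0 < 1 - x^2 * Real.sin t ^ 2 := by linarith
    rw [Real.norm_eq_abs, abs_div, abs_neg]
    have hnum : |x * Real.sin t ^ 2| ≤ m := by
      rw [abs_mul, abs_of_nonneg hs0]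
      nlinarith [abs_nonneg x]
    rw [abs_of_pos (Real.sqrt_pos.2 hupos)]
    exact div_le_div₀ (le_of_lt hm0) hnum (Real.sqrt_pos.2 hmsq) (Real.sqrt_le_sqrt hu)
  · exact intervalIntegrable_const
  · apply Filter.Eventually.of_forall
    intro t _ x hx
    obtain ⟨hx0, hxm, hx2⟩ := ball_facts ⟨hk0, hk1⟩ hx
    exact hasDerivAt_sqrtDelta (delta_pos hx2 t)

lemma hasDerivAt_one_div_sqrt {f : ℝ → ℝ} {f' t : ℝ} (hf : HasDerivAt f f' t) (h : 0 < f t) :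
    HasDerivAt (fun t => 1 / Real.sqrt (f t)) (-f' / (2 * f t * Real.sqrt (f t))) t := by
  have h2 := (Real.hasDerivAt_sqrt h.ne').comp t hf
  have h3 : Real.sqrt (f t) ≠ 0 := ne_of_gt (Real.sqrt_pos.2 h)
  have h4 := h2.inv h3
  simp only [one_div]
  refine h4.congr_deriv (Eq.symm ?_)
  have h5 : Real.sqrt (f t)^2 = f t := Real.sq_sqrt h.le
  simp only [Function.comp_apply]
  rw [h5]
  field_simp

lemma cont_gd {k : ℝ} (hk2 : k^2 < 1) :
    Continuous fun θ : ℝ =>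
      ((1 - 2*Real.sin θ^2) * (1 - k^2*Real.sin θ^2) + k^2*Real.sin θ^2*(1 - Real.sin θ^2)) /
        ((1 - k^2*Real.sin θ^2) * Real.sqrt (1 - k^2*Real.sin θ^2)) := by
  apply Continuous.div (by fun_prop) (by fun_prop)
  intro θ
  have := delta_pos hk2 θ
  positivity

lemma integral_gd_zero {k : ℝ} (hk2 : k^2 < 1) :
    ∫ θ in (0:ℝ)..(π/2),
      ((1 - 2*Real.sin θ^2) * (1 - k^2*Real.sin θ^2) + k^2*Real.sin θ^2*(1 - Real.sin θ^2)) /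
        ((1 - k^2*Real.sin θ^2) * Real.sqrt (1 - k^2*Real.sin θ^2)) = 0 := by
  have key := intervalIntegral.integral_eq_sub_of_hasDerivAt
    (f := fun θ => Real.sin θ * Real.cos θ * (1 / Real.sqrt (1 - k^2*Real.sin θ^2)))
    (f' := fun θ =>
      ((1 - 2*Real.sin θ^2) * (1 - k^2*Real.sin θ^2) + k^2*Real.sin θ^2*(1 - Real.sin θ^2)) /
        ((1 - k^2*Real.sin θ^2) * Real.sqrt (1 - k^2*Real.sin θ^2)))
    (a := 0) (b := π/2) ?_ ?_
  · rw [key]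
    norm_num [Real.sin_pi_div_two, Real.cos_pi_div_two]
  · intro θ _
    have hu : 0 < 1 - k^2*Real.sin θ^2 := delta_pos hk2 θ
    have h1 : HasDerivAt (fun θ => Real.sin θ * Real.cos θ)
        (Real.cos θ^2 - Real.sin θ^2) θ := by
      have := (Real.hasDerivAt_sin θ).mul (Real.hasDerivAt_cos θ)
      refine this.congr_deriv (Eq.symm ?_)
      ring
    have h2 : HasDerivAt (fun θ => 1 - k^2*Real.sin θ^2)
        (-(k^2*(2*Real.sin θ*Real.cos θ))) θ := by
      have := (((Real.hasDerivAt_sin θ).pow 2).const_mul (k^2)).const_sub 1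
      refine this.congr_deriv (Eq.symm ?_)
      ring
    have h3 := hasDerivAt_one_div_sqrt h2 hu
    have h4 := h1.mul h3
    refine h4.congr_deriv (Eq.symm ?_)
    have h5 : Real.sqrt (1 - k^2*Real.sin θ^2) ^ 2 = 1 - k^2*Real.sin θ^2 :=
      Real.sq_sqrt hu.le
    have h6 : Real.sqrt (1 - k^2*Real.sin θ^2) ≠ 0 := ne_of_gt (Real.sqrt_pos.2 hu)
    have hc : Real.cos θ^2 = 1 - Real.sin θ^2 := by
      have := Real.sin_sq_add_cos_sq θ; linarith
    have e1 : (Real.cos θ^2 - Real.sin θ^2) * (1 / Real.sqrt (1 - k^2*Real.sin θ^2)) +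
        Real.sin θ * Real.cos θ *
          (- -(k^2*(2*Real.sin θ*Real.cos θ)) /
            (2 * (1 - k^2*Real.sin θ^2) * Real.sqrt (1 - k^2*Real.sin θ^2))) =
        ((Real.cos θ^2 - Real.sin θ^2) * (1 - k^2*Real.sin θ^2) +
          k^2*Real.sin θ^2*Real.cos θ^2) /
          ((1 - k^2*Real.sin θ^2) * Real.sqrt (1 - k^2*Real.sin θ^2)) := by
      have hsp : 0 < Real.sqrt (1 - k^2*Real.sin θ^2) := Real.sqrt_pos.2 hu
      rw [mul_one_div, ← mul_div_assoc, div_add_div _ _ h6 (by positivity), div_eq_div_iff (by positivity) (by positivity)]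
      ring
    rw [e1, hc]
    ring_nf
  · exact (cont_gd hk2).intervalIntegrable _ _

lemma hasDerivAt_K_formula {k : ℝ} (hk : k ∈ Set.Ioo (0:ℝ) 1) :
    HasDerivAt ellipticK
      ((ellipticE k - (1-k^2)*ellipticK k)/(k*(1-k^2))) k := by
  obtain ⟨hk0, hk1⟩ := hk
  have hk2 : k^2 < 1 := by nlinarith
  have hkne : k ≠ 0 := ne_of_gt hk0
  have hk'ne : (1:ℝ) - k^2 ≠ 0 := by nlinarith
  have h := hasDerivAt_ellipticK ⟨hk0, hk1⟩
  have hpw : Set.EqOn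
      (fun θ => k * Real.sin θ ^ 2 /
        ((1 - k^2 * Real.sin θ ^ 2) * Real.sqrt (1 - k^2 * Real.sin θ ^ 2)))
      (fun θ => (1/(k*(1-k^2))) * Real.sqrt (1 - k^2*Real.sin θ^2)
        - (1/k) * (1 / Real.sqrt (1 - k^2*Real.sin θ^2))
        - (k/(1-k^2)) *
          (((1 - 2*Real.sin θ^2) * (1 - k^2*Real.sin θ^2) + k^2*Real.sin θ^2*(1 - Real.sin θ^2)) /
            ((1 - k^2*Real.sin θ^2) * Real.sqrt (1 - k^2*Real.sin θ^2))))
      (Set.uIcc 0 (π/2)) := by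
    intro θ _
    have hu : 0 < 1 - k^2*Real.sin θ^2 := delta_pos hk2 θ
    have h5 : Real.sqrt (1 - k^2*Real.sin θ^2) ^ 2 = 1 - k^2*Real.sin θ^2 := Real.sq_sqrt hu.le
    have h6 : Real.sqrt (1 - k^2*Real.sin θ^2) ≠ 0 := ne_of_gt (Real.sqrt_pos.2 hu)
    have hms : Real.sqrt (1 - k^2*Real.sin θ^2) * Real.sqrt (1 - k^2*Real.sin θ^2)
        = 1 - k^2*Real.sin θ^2 := Real.mul_self_sqrt hu.le
    simp only
    field_simp
    linear_combination (-(1 - k^2*Real.sin θ^2)) * hms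
  rw [intervalIntegral.integral_congr hpw] at h
  have i1 : IntervalIntegrable
      (fun θ => (1/(k*(1-k^2))) * Real.sqrt (1 - k^2*Real.sin θ^2)) MeasureTheory.volume 0 (π/2) :=
    (Continuous.intervalIntegrable (by fun_prop) _ _)
  have i2 : IntervalIntegrable
      (fun θ => (1/k) * (1 / Real.sqrt (1 - k^2*Real.sin θ^2))) MeasureTheory.volume 0 (π/2) :=
    (continuous_const.mul (cont_inv hk2)).intervalIntegrable _ _
  have i3 : IntervalIntegrable
      (fun θ => (k/(1-k^2)) *
        (((1 - 2*Real.sin θ^2) * (1 - k^2*Real.sin θ^2) + k^2*Real.sin θ^2*(1 - Real.sin θ^2)) /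
          ((1 - k^2*Real.sin θ^2) * Real.sqrt (1 - k^2*Real.sin θ^2)))) MeasureTheory.volume 0 (π/2) :=
    (continuous_const.mul (cont_gd hk2)).intervalIntegrable _ _
  rw [intervalIntegral.integral_sub (i1.sub i2) i3, intervalIntegral.integral_sub i1 i2,
    intervalIntegral.integral_const_mul, intervalIntegral.integral_const_mul,
    intervalIntegral.integral_const_mul, integral_gd_zero hk2] at h
  have : (1/(k*(1-k^2))) * (∫ θ in (0:ℝ)..(π/2), Real.sqrt (1 - k^2*Real.sin θ^2))
      - (1/k) * (∫ θ in (0:ℝ)..(π/2), 1 / Real.sqrt (1 - k^2*Real.sin θ^2))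
      - (k/(1-k^2)) * 0
      = (ellipticE k - (1-k^2)*ellipticK k)/(k*(1-k^2)) := by
    rw [ellipticE, ellipticK]
    field_simp
    ring
  rwa [this] at h

lemma hasDerivAt_E_formula {k : ℝ} (hk : k ∈ Set.Ioo (0:ℝ) 1) :
    HasDerivAt ellipticE ((ellipticE k - ellipticK k)/k) k := by
  obtain ⟨hk0, hk1⟩ := hk
  have hk2 : k^2 < 1 := by nlinarith
  have hkne : k ≠ 0 := ne_of_gt hk0
  have h := hasDerivAt_ellipticE ⟨hk0, hk1⟩
  have hpw : Set.EqOn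
      (fun θ => -(k * Real.sin θ ^ 2) / Real.sqrt (1 - k^2 * Real.sin θ ^ 2))
      (fun θ => (1/k) * Real.sqrt (1 - k^2*Real.sin θ^2)
        - (1/k) * (1 / Real.sqrt (1 - k^2*Real.sin θ^2)))
      (Set.uIcc 0 (π/2)) := by
    intro θ _
    have hu : 0 < 1 - k^2*Real.sin θ^2 := delta_pos hk2 θ
    have h6 : Real.sqrt (1 - k^2*Real.sin θ^2) ≠ 0 := ne_of_gt (Real.sqrt_pos.2 hu)
    have hms : Real.sqrt (1 - k^2*Real.sin θ^2) * Real.sqrt (1 - k^2*Real.sin θ^2)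
        = 1 - k^2*Real.sin θ^2 := Real.mul_self_sqrt hu.le
    simp only
    field_simp
    linear_combination (-1 : ℝ) * hms
  rw [intervalIntegral.integral_congr hpw] at h
  have i1 : IntervalIntegrable
      (fun θ => (1/k) * Real.sqrt (1 - k^2*Real.sin θ^2)) MeasureTheory.volume 0 (π/2) :=
    (Continuous.intervalIntegrable (by fun_prop) _ _)
  have i2 : IntervalIntegrable
      (fun θ => (1/k) * (1 / Real.sqrt (1 - k^2*Real.sin θ^2))) MeasureTheory.volume 0 (π/2) :=
    (continuous_const.mul (cont_inv hk2)).intervalIntegrable _ _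
  rw [intervalIntegral.integral_sub i1 i2, intervalIntegral.integral_const_mul,
    intervalIntegral.integral_const_mul] at h
  have : (1/k) * (∫ θ in (0:ℝ)..(π/2), Real.sqrt (1 - k^2*Real.sin θ^2))
      - (1/k) * (∫ θ in (0:ℝ)..(π/2), 1 / Real.sqrt (1 - k^2*Real.sin θ^2))
      = (ellipticE k - ellipticK k)/k := by
    rw [ellipticE, ellipticK]
    field_simp
  rwa [this] at h

lemma hasDerivAt_L {k : ℝ} (hk : k ∈ Set.Ioo (0:ℝ) 1) :
    HasDerivAt (fun x : ℝ => ellipticK x * ellipticE (Real.sqrt (1-x^2)) +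
      ellipticE x * ellipticK (Real.sqrt (1-x^2)) -
      ellipticK x * ellipticK (Real.sqrt (1-x^2))) 0 k := by
  obtain ⟨hk0, hk1⟩ := hk
  have hk2 : k^2 < 1 := by nlinarith
  have h1k2 : 0 < 1 - k^2 := by nlinarith
  set kp := Real.sqrt (1-k^2) with hkp
  have hkp0 : 0 < kp := Real.sqrt_pos.2 h1k2
  have hkpsq : kp^2 = 1 - k^2 := Real.sq_sqrt h1k2.le
  have hkp1 : kp < 1 := by nlinarith
  have hsq : HasDerivAt (fun x : ℝ => Real.sqrt (1-x^2)) (-(k*1^2)/Real.sqrt (1-k^2*1^2)) k := by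
    have h0 : 0 < 1 - k^2*(1:ℝ)^2 := by nlinarith
    have := hasDerivAt_sqrtDelta (s := (1:ℝ)) (x := k) h0
    simpa using this
  rw [show -(k*(1:ℝ)^2)/Real.sqrt (1-k^2*(1:ℝ)^2) = -k/kp by norm_num [hkp]] at hsq
  have hkpIoo : kp ∈ Set.Ioo (0:ℝ) 1 := ⟨hkp0, hkp1⟩
  have hK := hasDerivAt_K_formula (⟨hk0, hk1⟩ : k ∈ Set.Ioo (0:ℝ) 1)
  have hE := hasDerivAt_E_formula (⟨hk0, hk1⟩ : k ∈ Set.Ioo (0:ℝ) 1)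
  have hkne : k ≠ 0 := ne_of_gt hk0
  have h1kne : (1:ℝ) - k^2 ≠ 0 := ne_of_gt h1k2
  have hkpne : kp ≠ 0 := ne_of_gt hkp0
  have e2 : kp*kp = 1 - k^2 := by nlinarith [hkpsq]
  have hK1 : HasDerivAt (fun x : ℝ => ellipticK (Real.sqrt (1-x^2)))
      (-(ellipticE kp - k^2*ellipticK kp)/(k*(1-k^2))) k := by
    have h := (hasDerivAt_K_formula hkpIoo).comp k hsq
    refine h.congr_deriv (Eq.symm ?_)
    rw [hkpsq, show (1:ℝ) - (1 - k^2) = k^2 by ring]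
    field_simp
    linear_combination (k^2*ellipticK kp - ellipticE kp) * hkpsq
  have hE1 : HasDerivAt (fun x : ℝ => ellipticE (Real.sqrt (1-x^2)))
      (-(k*(ellipticE kp - ellipticK kp))/(1-k^2)) k := by
    have h := (hasDerivAt_E_formula hkpIoo).comp k hsq
    refine h.congr_deriv (Eq.symm ?_)
    field_simp
    linear_combination (ellipticK kp - ellipticE kp) * hkpsq
  have hF := ((hK.mul hE1).add (hE.mul hK1)).sub (hK.mul hK1)
  refine hF.congr_deriv (Eq.symm ?_)
  rw [← hkp]
  field_simp
  ring

lemma tendsto_K : Filter.Tendsto ellipticK (nhdsWithin 0 (Set.Ioi 0)) (nhds (π/2)) := by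
  have h : Filter.Tendsto (fun k : ℝ => ∫ θ in (0:ℝ)..(π/2),
      1 / Real.sqrt (1 - k^2 * Real.sin θ ^ 2)) (nhdsWithin 0 (Set.Ioi 0))
      (nhds (∫ θ in (0:ℝ)..(π/2), (1:ℝ))) := by
    apply intervalIntegral.tendsto_integral_filter_of_dominated_convergence (bound := fun _ => 2)
    · filter_upwards [Ioo_mem_nhdsGT_of_mem (Set.mem_Ico.2 ⟨le_refl (0:ℝ), by norm_num⟩ :
        (0:ℝ) ∈ Set.Ico 0 (1/2))] with n hn
      exact ((cont_inv (by nlinarith [hn.1, hn.2] : n^2 < 1)).aestronglyMeasurable)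
    · filter_upwards [Ioo_mem_nhdsGT_of_mem (Set.mem_Ico.2 ⟨le_refl (0:ℝ), by norm_num⟩ :
        (0:ℝ) ∈ Set.Ico 0 (1/2))] with n hn
      apply MeasureTheory.ae_of_all
      intro θ _
      have hs : Real.sin θ ^ 2 ≤ 1 := Real.sin_sq_le_one θ
      have hs0 : (0:ℝ) ≤ Real.sin θ ^ 2 := sq_nonneg _
      have h1 : (1:ℝ)/2 ≤ 1 - n^2 * Real.sin θ^2 := by nlinarith [hn.1, hn.2]
      have h2 : Real.sqrt (1/2) ≤ Real.sqrt (1 - n^2 * Real.sin θ^2) := Real.sqrt_le_sqrt h1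
      have h3 : (1:ℝ)/2 ≤ Real.sqrt (1/2) := by
        nlinarith [Real.sq_sqrt (show (0:ℝ) ≤ 1/2 by norm_num),
          Real.sqrt_nonneg (1/2:ℝ)]
      rw [Real.norm_eq_abs, abs_of_nonneg (by positivity)]
      rw [div_le_iff₀ (by linarith)]
      linarith
    · exact intervalIntegrable_const
    · apply MeasureTheory.ae_of_all
      intro θ _
      have hc : ContinuousAt (fun n : ℝ => 1 / Real.sqrt (1 - n^2 * Real.sin θ ^ 2)) 0 := by
        apply ContinuousAt.div continuousAt_const
        · exact (Real.continuous_sqrt.comp (by continuity)).continuousAt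
        · simp
      have := hc.tendsto.mono_left
        (nhdsWithin_le_nhds : nhdsWithin (0:ℝ) (Set.Ioi 0) ≤ nhds 0)
      simpa using this
  rw [intervalIntegral.integral_const] at h
  simp only [smul_eq_mul, mul_one, sub_zero] at h
  exact h

lemma tendsto_E : Filter.Tendsto ellipticE (nhdsWithin 0 (Set.Ioi 0)) (nhds (π/2)) := by
  have h : Filter.Tendsto (fun k : ℝ => ∫ θ in (0:ℝ)..(π/2),
      Real.sqrt (1 - k^2 * Real.sin θ ^ 2)) (nhdsWithin 0 (Set.Ioi 0))
      (nhds (∫ θ in (0:ℝ)..(π/2), (1:ℝ))) := by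
    apply intervalIntegral.tendsto_integral_filter_of_dominated_convergence (bound := fun _ => 1)
    · exact Filter.Eventually.of_forall fun n => (cont_delta n).aestronglyMeasurable
    · apply Filter.Eventually.of_forall
      intro n
      apply MeasureTheory.ae_of_all
      intro θ _
      rw [Real.norm_eq_abs, abs_of_nonneg (Real.sqrt_nonneg _)]
      have hb : (1:ℝ) - n^2 * Real.sin θ ^ 2 ≤ 1 := by nlinarith [sq_nonneg (n * Real.sin θ)]
      calc Real.sqrt (1 - n^2 * Real.sin θ ^ 2) ≤ Real.sqrt 1 := Real.sqrt_le_sqrt hb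
        _ = 1 := Real.sqrt_one
    · exact intervalIntegrable_const
    · apply MeasureTheory.ae_of_all
      intro θ _
      have hc : ContinuousAt (fun n : ℝ => Real.sqrt (1 - n^2 * Real.sin θ ^ 2)) 0 :=
        (Real.continuous_sqrt.comp (by continuity)).continuousAt
      have := hc.tendsto.mono_left
        (nhdsWithin_le_nhds : nhdsWithin (0:ℝ) (Set.Ioi 0) ≤ nhds 0)
      simpa using this
  rw [intervalIntegral.integral_const] at h
  simp only [smul_eq_mul, mul_one, sub_zero] at h
  exact h

lemma tendsto_E' : Filter.Tendsto (fun k : ℝ => ellipticE (Real.sqrt (1 - k^2)))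
    (nhdsWithin 0 (Set.Ioi 0)) (nhds 1) := by
  have h : Filter.Tendsto (fun k : ℝ => ∫ θ in (0:ℝ)..(π/2),
      Real.sqrt (1 - (1 - k^2) * Real.sin θ ^ 2)) (nhdsWithin 0 (Set.Ioi 0))
      (nhds (∫ θ in (0:ℝ)..(π/2), Real.cos θ)) := by
    apply intervalIntegral.tendsto_integral_filter_of_dominated_convergence (bound := fun _ => 1)
    · apply Filter.Eventually.of_forall
      intro n
      exact Continuous.aestronglyMeasurable (by fun_prop)
    · filter_upwards [Ioo_mem_nhdsGT_of_mem (Set.mem_Ico.2 ⟨le_refl (0:ℝ), by norm_num⟩ :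
        (0:ℝ) ∈ Set.Ico 0 1)] with n hn
      apply MeasureTheory.ae_of_all
      intro θ _
      rw [Real.norm_eq_abs, abs_of_nonneg (Real.sqrt_nonneg _)]
      have hb : (1:ℝ) - (1 - n^2) * Real.sin θ ^ 2 ≤ 1 := by
        have h1n : (0:ℝ) ≤ 1 - n^2 := by nlinarith [hn.1, hn.2]
        have := mul_nonneg h1n (sq_nonneg (Real.sin θ))
        linarith
      calc Real.sqrt (1 - (1 - n^2) * Real.sin θ ^ 2) ≤ Real.sqrt 1 := Real.sqrt_le_sqrt hb
        _ = 1 := Real.sqrt_one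
    · exact intervalIntegrable_const
    · apply MeasureTheory.ae_of_all
      intro θ hθ
      have hθ' : θ ∈ Set.Ioc (0:ℝ) (π/2) := by
        rwa [Set.uIoc_of_le (by positivity : (0:ℝ) ≤ π/2)] at hθ
      have hcos : 0 ≤ Real.cos θ :=
        Real.cos_nonneg_of_mem_Icc ⟨by linarith [hθ'.1, Real.pi_pos], hθ'.2⟩
      have hc : ContinuousAt (fun n : ℝ => Real.sqrt (1 - (1 - n^2) * Real.sin θ ^ 2)) 0 :=
        (Real.continuous_sqrt.comp (by continuity)).continuousAt
      have h2 := hc.tendsto.mono_left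
        (nhdsWithin_le_nhds : nhdsWithin (0:ℝ) (Set.Ioi 0) ≤ nhds 0)
      have h3 : Real.sqrt (1 - (1 - (0:ℝ)^2) * Real.sin θ ^ 2) = Real.cos θ := by
        rw [show 1 - (1 - (0:ℝ)^2) * Real.sin θ ^ 2 = Real.cos θ ^ 2 by
          have := Real.sin_sq_add_cos_sq θ; ring_nf; linarith]
        exact Real.sqrt_sq hcos
      rwa [h3] at h2
  rw [integral_cos] at h
  simp only [Real.sin_pi_div_two, Real.sin_zero, sub_zero] at h
  apply h.congr'
  filter_upwards [Ioo_mem_nhdsGT_of_mem (Set.mem_Ico.2 ⟨le_refl (0:ℝ), by norm_num⟩ :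
      (0:ℝ) ∈ Set.Ico 0 1)] with n hn
  rw [ellipticE]
  congr 1
  ext θ
  rw [Real.sq_sqrt (by nlinarith [hn.1, hn.2] : (0:ℝ) ≤ 1 - n^2)]

lemma EK_diff_bound {k : ℝ} (hk : k ∈ Set.Ioo (0:ℝ) 1) :
    |ellipticE k - ellipticK k| ≤ (k^2 / Real.sqrt (1-k^2)) * (π/2) := by
  obtain ⟨hk0, hk1⟩ := hk
  have hk2 : k^2 < 1 := by nlinarith
  have h1k2 : (0:ℝ) < 1 - k^2 := by nlinarith
  have i1 : IntervalIntegrable (fun θ => Real.sqrt (1 - k^2*Real.sin θ^2))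
      MeasureTheory.volume 0 (π/2) := (cont_delta k).intervalIntegrable _ _
  have i2 : IntervalIntegrable (fun θ => 1 / Real.sqrt (1 - k^2*Real.sin θ^2))
      MeasureTheory.volume 0 (π/2) := (cont_inv hk2).intervalIntegrable _ _
  have heq : ellipticE k - ellipticK k = ∫ θ in (0:ℝ)..(π/2),
      (Real.sqrt (1 - k^2*Real.sin θ^2) - 1 / Real.sqrt (1 - k^2*Real.sin θ^2)) := by
    rw [ellipticE, ellipticK, ← intervalIntegral.integral_sub i1 i2]
  rw [heq]
  have key := intervalIntegral.norm_integral_le_of_norm_le_const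
    (C := k^2 / Real.sqrt (1-k^2))
    (f := fun θ => Real.sqrt (1 - k^2*Real.sin θ^2) - 1 / Real.sqrt (1 - k^2*Real.sin θ^2))
    (a := 0) (b := π/2) ?_
  · rw [Real.norm_eq_abs] at key
    calc |∫ θ in (0:ℝ)..(π/2), (Real.sqrt (1 - k^2*Real.sin θ^2) -
          1 / Real.sqrt (1 - k^2*Real.sin θ^2))| ≤ k^2 / Real.sqrt (1-k^2) * |π/2 - 0| := key
      _ = (k^2 / Real.sqrt (1-k^2)) * (π/2) := by
          rw [sub_zero, abs_of_pos (by positivity)]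
  · intro θ _
    have hu : 0 < 1 - k^2*Real.sin θ^2 := delta_pos hk2 θ
    have hu1 : 1 - k^2*Real.sin θ^2 ≤ 1 := by nlinarith [sq_nonneg (k * Real.sin θ)]
    have hsp : 0 < Real.sqrt (1 - k^2*Real.sin θ^2) := Real.sqrt_pos.2 hu
    have hms : Real.sqrt (1 - k^2*Real.sin θ^2) * Real.sqrt (1 - k^2*Real.sin θ^2)
        = 1 - k^2*Real.sin θ^2 := Real.mul_self_sqrt hu.le
    have hrw : Real.sqrt (1 - k^2*Real.sin θ^2) - 1 / Real.sqrt (1 - k^2*Real.sin θ^2)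
        = -(k^2*Real.sin θ^2 / Real.sqrt (1 - k^2*Real.sin θ^2)) := by
      field_simp
      linear_combination hms
    simp only [hrw, Real.norm_eq_abs, abs_neg]
    rw [abs_of_nonneg (by positivity)]
    apply div_le_div₀ (by positivity) (by nlinarith [Real.sin_sq_le_one θ, sq_nonneg k])
      (Real.sqrt_pos.2 h1k2)
    apply Real.sqrt_le_sqrt
    nlinarith [sq_nonneg (k * Real.sin θ), Real.sin_sq_le_one θ, sq_nonneg k]

lemma Kp_bound {k : ℝ} (hk : k ∈ Set.Ioo (0:ℝ) 1) :
    |ellipticK (Real.sqrt (1-k^2))| ≤ (1/k) * (π/2) := by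
  obtain ⟨hk0, hk1⟩ := hk
  have h1k2 : (0:ℝ) < 1 - k^2 := by nlinarith
  rw [ellipticK]
  have key := intervalIntegral.norm_integral_le_of_norm_le_const
    (C := 1/k)
    (f := fun θ => 1 / Real.sqrt (1 - (Real.sqrt (1-k^2))^2 * Real.sin θ^2))
    (a := 0) (b := π/2) ?_
  · rw [Real.norm_eq_abs] at key
    calc |∫ θ in (0:ℝ)..(π/2), 1 / Real.sqrt (1 - (Real.sqrt (1-k^2))^2 * Real.sin θ^2)|
        ≤ 1/k * |π/2 - 0| := key
      _ = (1/k) * (π/2) := by rw [sub_zero, abs_of_pos (by positivity)]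
  · intro θ _
    have hsq : (Real.sqrt (1-k^2))^2 = 1-k^2 := Real.sq_sqrt h1k2.le
    rw [hsq]
    have hu : k^2 ≤ 1 - (1-k^2)*Real.sin θ^2 := by
      nlinarith [Real.sin_sq_le_one θ, sq_nonneg (Real.sin θ)]
    have hk2pos : (0:ℝ) < k^2 := by positivity
    have hsk : k ≤ Real.sqrt (1 - (1-k^2)*Real.sin θ^2) := by
      calc k = Real.sqrt (k^2) := by rw [Real.sqrt_sq hk0.le]
        _ ≤ _ := Real.sqrt_le_sqrt hu
    have hsp : 0 < Real.sqrt (1 - (1-k^2)*Real.sin θ^2) := lt_of_lt_of_le hk0 hsk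
    rw [Real.norm_eq_abs, abs_of_nonneg (by positivity)]
    rw [div_le_div_iff₀ hsp hk0]
    linarith

lemma prod_tendsto : Filter.Tendsto
    (fun k : ℝ => (ellipticE k - ellipticK k) * ellipticK (Real.sqrt (1-k^2)))
    (nhdsWithin 0 (Set.Ioi 0)) (nhds 0) := by
  apply squeeze_zero_norm' (a := fun k : ℝ => (π/2)^2 * (k / Real.sqrt (1-k^2)))
  · filter_upwards [Ioo_mem_nhdsGT_of_mem (Set.mem_Ico.2 ⟨le_refl (0:ℝ), by norm_num⟩ :
      (0:ℝ) ∈ Set.Ico 0 1)] with k hk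
    have hk0 := hk.1
    have h1k2 : (0:ℝ) < 1 - k^2 := by nlinarith [hk.1, hk.2]
    rw [Real.norm_eq_abs, abs_mul]
    calc |ellipticE k - ellipticK k| * |ellipticK (Real.sqrt (1-k^2))|
        ≤ ((k^2 / Real.sqrt (1-k^2)) * (π/2)) * ((1/k) * (π/2)) := by
          apply mul_le_mul (EK_diff_bound hk) (Kp_bound hk) (abs_nonneg _) (by positivity)
      _ = (π/2)^2 * (k / Real.sqrt (1-k^2)) := by
          field_simp
  · have hc : ContinuousAt (fun k : ℝ => (π/2)^2 * (k / Real.sqrt (1-k^2))) 0 := by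
      apply ContinuousAt.mul continuousAt_const
      apply ContinuousAt.div continuousAt_id
      · exact (Real.continuous_sqrt.comp (by continuity)).continuousAt
      · simp
    have := hc.tendsto.mono_left
      (nhdsWithin_le_nhds : nhdsWithin (0:ℝ) (Set.Ioi 0) ≤ nhds 0)
    simpa using this

theorem legendre_relation (k : ℝ) (hk : k ∈ Set.Ioo (0:ℝ) 1) :
    ellipticK k * ellipticE (Real.sqrt (1 - k^2)) +
      ellipticE k * ellipticK (Real.sqrt (1 - k^2)) -
      ellipticK k * ellipticK (Real.sqrt (1 - k^2)) = π/2 := by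
  set L : ℝ → ℝ := fun x => ellipticK x * ellipticE (Real.sqrt (1-x^2)) +
      ellipticE x * ellipticK (Real.sqrt (1-x^2)) -
      ellipticK x * ellipticK (Real.sqrt (1-x^2)) with hL
  have hmvt : ∀ a b : ℝ, a ∈ Set.Ioo (0:ℝ) 1 → b ∈ Set.Ioo (0:ℝ) 1 → a < b → L a = L b := by
    intro a b ha hb hab
    obtain ⟨c, _, hc2⟩ := exists_hasDerivAt_eq_slope L (fun _ => 0) hab
      (fun y hy => ((hasDerivAt_L ⟨lt_of_lt_of_le ha.1 hy.1,
        lt_of_le_of_lt hy.2 hb.2⟩).continuousAt).continuousWithinAt)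
      (fun y hy => hasDerivAt_L ⟨lt_trans ha.1 hy.1, lt_trans hy.2 hb.2⟩)
    have hba : b - a ≠ 0 := sub_ne_zero.2 (ne_of_gt hab)
    rw [eq_comm, div_eq_iff hba] at hc2
    have : L b - L a = 0 := by linarith [hc2]
    linarith
  have h1 : Filter.Tendsto L (nhdsWithin 0 (Set.Ioi 0)) (nhds (π/2)) := by
    have h2 : Filter.Tendsto (fun x : ℝ => ellipticK x * ellipticE (Real.sqrt (1-x^2)) +
        (ellipticE x - ellipticK x) * ellipticK (Real.sqrt (1-x^2)))
        (nhdsWithin 0 (Set.Ioi 0)) (nhds (π/2 * 1 + 0)) :=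
      (tendsto_K.mul tendsto_E').add prod_tendsto
    rw [show π/2 * 1 + 0 = π/2 by ring] at h2
    apply h2.congr
    intro x
    show _ = ellipticK x * ellipticE (Real.sqrt (1-x^2)) +
      ellipticE x * ellipticK (Real.sqrt (1-x^2)) -
      ellipticK x * ellipticK (Real.sqrt (1-x^2))
    ring
  have h3 : Filter.Tendsto L (nhdsWithin 0 (Set.Ioi 0)) (nhds (L k)) := by
    apply Filter.Tendsto.congr' _ (tendsto_const_nhds (x := L k))
    filter_upwards [Ioo_mem_nhdsGT_of_mem (Set.mem_Ico.2 ⟨le_refl (0:ℝ), hk.1⟩ :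
        (0:ℝ) ∈ Set.Ico 0 k)] with x hx
    exact (hmvt x k ⟨hx.1, lt_trans hx.2 hk.2⟩ hk hx.2).symm
  have hfinal : L k = π/2 := tendsto_nhds_unique h3 h1
  simpa only [hL] using hfinal
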